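/- C_{#≤2} ≡_sW SEP₁: closed choice on Cantor space restricted to sets with at most two elements is strongly continuously Weihrauch equivalent to the restricted separation problem SEP₁. -/

import Mathlib

open Filter Topology

abbrev Baire : Type := ℕ → ℕ

/-- The pairing `⟨p,q⟩(2n) = p(n)`, `⟨p,q⟩(2n+1) = q(n)`. -/
def pairB (p q : Baire) : Baire := fun n => if n % 2 = 0 then p (n / 2) else q (n / 2)

/-- A problem: a partial multivalued function on Baire space. -/
structure Problem where
  dom : Set Baire
  sol : Baire → Set Baire

/-- Continuous Weihrauch reducibility. -/
def WRed (f g : Problem) : Prop :=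
  ∃ (Kd Hd : Set Baire) (K H : Baire → Baire),
    ContinuousOn K Kd ∧ ContinuousOn H Hd ∧
      ∀ p ∈ f.dom, p ∈ Kd ∧ K p ∈ g.dom ∧
        ∀ q ∈ g.sol (K p), pairB p q ∈ Hd ∧ H (pairB p q) ∈ f.sol p

/-- Strong continuous Weihrauch reducibility. -/
def SWRed (f g : Problem) : Prop :=
  ∃ (Kd Hd : Set Baire) (K H : Baire → Baire),
    ContinuousOn K Kd ∧ ContinuousOn H Hd ∧
      ∀ p ∈ f.dom, p ∈ Kd ∧ K p ∈ g.dom ∧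
        ∀ q ∈ g.sol (K p), q ∈ Hd ∧ H q ∈ f.sol p

def WEquiv (f g : Problem) : Prop := WRed f g ∧ WRed g f
def SWEquiv (f g : Problem) : Prop := SWRed f g ∧ SWRed g f
def WLt (f g : Problem) : Prop := WRed f g ∧ ¬ WRed g f

/-- `range(p-1)`. -/
def rangeM (p : Baire) : Set ℕ := {n | ∃ i, p i = n + 1}

/-- Characteristic function of a set of naturals. -/
noncomputable def chi (A : Set ℕ) : Baire := A.indicator fun _ => 1

noncomputable def EC : Problem where
  dom := Set.univ
  sol := fun p => {chi (rangeM p)}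

noncomputable def EC1 : Problem where
  dom := {p | ((rangeM p)ᶜ).encard ≤ 1}
  sol := fun p => {chi (rangeM p)}

def pfst (r : Baire) : Baire := fun n => r (2 * n)
def psnd (r : Baire) : Baire := fun n => r (2 * n + 1)

noncomputable def SEP : Problem where
  dom := {r | rangeM (pfst r) ∩ rangeM (psnd r) = ∅}
  sol := fun r =>
    {s | ∃ A : Set ℕ, s = chi A ∧ rangeM (pfst r) ⊆ A ∧ A ⊆ (rangeM (psnd r))ᶜ}

noncomputable def SEP1 : Problem where
  dom := {r | rangeM (pfst r) ∩ rangeM (psnd r) = ∅ ∧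
    ((rangeM (pfst r) ∪ rangeM (psnd r))ᶜ).encard ≤ 1}
  sol := SEP.sol

/- rationals -/
def ratEnum (i : ℕ) : ℚ :=
  ((i.unpair.1 : ℚ) - (i.unpair.2.unpair.1 : ℚ)) / ((i.unpair.2.unpair.2 : ℚ) + 1)

def rhoCauchy (p : Baire) (x : ℝ) : Prop :=
  ∀ n, |(ratEnum (p n) : ℝ) - x| ≤ (2 : ℝ) ^ (-(n : ℤ))

def rhoNaive (p : Baire) (x : ℝ) : Prop :=
  Tendsto (fun n => ((ratEnum (p n) : ℝ))) atTop (nhds x)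

def rhoLt (p : Baire) (x : ℝ) : Prop := rangeM p = {n | (ratEnum n : ℝ) < x}
def rhoGt (p : Baire) (x : ℝ) : Prop := rangeM p = {n | x < (ratEnum n : ℝ)}

def rhoCfLt (p : Baire) (x : ℝ) : Prop :=
  (∀ n, p n ≤ 1) ∧ ∀ n, (p n = 1 ↔ (ratEnum n : ℝ) < x)
def rhoCfGt (p : Baire) (x : ℝ) : Prop :=
  (∀ n, p n ≤ 1) ∧ ∀ n, (p n = 1 ↔ x < (ratEnum n : ℝ))

noncomputable def cfTail : List ℕ → ℝ
  | [] => 0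
  | b :: l => 1 / ((b : ℝ) + cfTail l)

noncomputable def cfApprox (p : Baire) (k : ℕ) : ℝ :=
  ((Denumerable.ofNat ℤ (p 0) : ℤ) : ℝ) + cfTail ((List.range k).map fun i => p (i + 1))

def rhoCf (p : Baire) (x : ℝ) : Prop :=
  ((∀ i, 1 ≤ i → 1 ≤ p i) ∧ Tendsto (cfApprox p) atTop (nhds x)) ∨
    (∃ k, 1 ≤ k ∧ p k = 0 ∧ (∀ i, 1 ≤ i → i < k → 1 ≤ p i) ∧
      (2 ≤ k → 2 ≤ p (k - 1)) ∧ x = cfApprox p (k - 1))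

def rhoDec (p : Baire) (x : ℝ) : Prop :=
  (∀ n, 1 ≤ n → p n ≤ 9) ∧
    x = ((Denumerable.ofNat ℤ (p 0) : ℤ) : ℝ) + ∑' n : ℕ, (p (n + 1) : ℝ) / 10 ^ (n + 1)

/-- The implication problem between two representations of ℝ. -/
def implProblem (d1 d2 : Baire → ℝ → Prop) : Problem where
  dom := {p | ∃ x, d1 p x}
  sol := fun p => {q | ∃ x, d1 p x ∧ d2 q x}

/- trees / WKL / choice on Cantor space -/
def wordCode : List Bool → ℕ
  | [] => 0
  | b :: w => 2 * wordCode w + (if b then 2 else 1)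

def prefixList (x : Baire) (k : ℕ) : List Bool := (List.range k).map fun i => decide (x i = 1)

def isTreeCode (t : Baire) : Prop :=
  (∀ n, t n ≤ 1) ∧
    ∀ w v : List Bool, w <+: v → t (wordCode v) = 1 → t (wordCode w) = 1

def WKL : Problem where
  dom := {t | isTreeCode t ∧ {w : List Bool | t (wordCode w) = 1}.Infinite}
  sol := fun t => {x | (∀ n, x n ≤ 1) ∧ ∀ k, t (wordCode (prefixList x k)) = 1}

def Ap (p : Baire) : Set Baire :=
  {x | (∀ n, x n ≤ 1) ∧ ∀ k, wordCode (prefixList x k) ∉ rangeM p}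

def CCantor : Problem where
  dom := {p | (Ap p).Nonempty}
  sol := Ap

def Cle2 : Problem where
  dom := {p | (Ap p).Nonempty ∧ (Ap p).encard ≤ 2}
  sol := Ap

/- limit and parallelization -/
def projCount (r : Baire) (n : ℕ) : Baire := fun k => r (Nat.pair n k)

def limP : Problem where
  dom := {r | ∃ q : Baire, ∀ k, Tendsto (fun n => projCount r n k) atTop (nhds (q k))}
  sol := fun r => {q | ∀ k, Tendsto (fun n => projCount r n k) atTop (nhds (q k))}

def parallel (f : Problem) : Problem where
  dom := {r | ∀ n, projCount r n ∈ f.dom}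
  sol := fun r => {s | ∀ n, projCount s n ∈ f.sol (projCount r n)}

def MCT : Problem where
  dom := {r | ∃ xs : ℕ → ℝ, (∀ n, rhoCauchy (projCount r n) (xs n)) ∧
    Monotone xs ∧ BddAbove (Set.range xs)}
  sol := fun r => {q | ∃ xs : ℕ → ℝ, (∀ n, rhoCauchy (projCount r n) (xs n)) ∧
    Monotone xs ∧ BddAbove (Set.range xs) ∧ rhoCauchy q (⨆ n, xs n)}

/- SORT and RAT -/
open Classical in
noncomputable def sortOut (p : Baire) : Baire := fun k =>
  if {i | p i = 0}.Infinite then 0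
  else if k < {i | p i = 0}.ncard then 0 else 1

noncomputable def SORT : Problem where
  dom := {p | ∀ n, p n ≤ 1}
  sol := fun p => {sortOut p}

def znk (n : ℕ) : Baire := fun k => if k < n then 0 else 1

def RAT : Problem where
  dom := {p | ∃ x, rhoCauchy p x}
  sol := fun p => {s | ∃ x, rhoCauchy p x ∧
    ((∃ n, x = (ratEnum n : ℝ) ∧ s = znk n) ∨
      ((∀ r : ℚ, x ≠ (r : ℝ)) ∧ s = fun _ => 0))}

/- omniscience principles -/
def projFin (m i : ℕ) (r : Baire) : Baire := fun k => r (m * k + i - 1)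
def isZeroSeq (p : Baire) : Prop := ∀ k, p k = 0
def constSeq (i : ℕ) : Baire := fun _ => i

noncomputable def LPOn (n : ℕ) : Problem where
  dom := Set.univ
  sol := fun r => {constSeq ({i | 1 ≤ i ∧ i ≤ n ∧ isZeroSeq (projFin n i r)}.ncard)}

def LLPOn (n : ℕ) : Problem where
  dom := {r | {i | 1 ≤ i ∧ i ≤ n ∧ ¬ isZeroSeq (projFin n i r)}.encard ≤ 1}
  sol := fun r => {s | ∃ i, 1 ≤ i ∧ i ≤ n ∧ isZeroSeq (projFin n i r) ∧ s = constSeq i}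

def MLPOn (n : ℕ) : Problem where
  dom := {r | ∃ i, 1 ≤ i ∧ i ≤ n ∧ isZeroSeq (projFin n i r)}
  sol := fun r => {s | ∃ i, 1 ≤ i ∧ i ≤ n ∧ isZeroSeq (projFin n i r) ∧ s = constSeq i}

def LPO : Problem where
  dom := Set.univ
  sol := fun p => {s | (isZeroSeq p ∧ s = constSeq 1) ∨ (¬ isZeroSeq p ∧ s = constSeq 0)}

/- choice problems on ℕ etc. -/
def Cfin (n : ℕ) : Problem where
  dom := {p | ∃ i, i < n ∧ i ∉ rangeM p}
  sol := fun p => {s | ∃ i, i < n ∧ i ∉ rangeM p ∧ s = constSeq i}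

def ACCfin (n : ℕ) : Problem where
  dom := {p | (∃ i, i < n ∧ i ∉ rangeM p) ∧ ({i | i < n} ∩ rangeM p).encard ≤ 1}
  sol := (Cfin n).sol

def CNat : Problem where
  dom := {p | ∃ i, i ∉ rangeM p}
  sol := fun p => {s | ∃ i, i ∉ rangeM p ∧ s = constSeq i}

/- differentiation -/
instance : Countable (AddMonoidAlgebra ℚ ℕ) :=
  (AddMonoidAlgebra.coeffEquiv (R := ℚ) (M := ℕ)).injective.countable

instance : Countable (Polynomial ℚ) :=
  Polynomial.toFinsupp_injective.countable

noncomputable def polyEnum : ℕ → Polynomial ℚ :=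
  (exists_surjective_nat (Polynomial ℚ)).choose

noncomputable def polyFun (k : ℕ) : C(Set.Icc (0:ℝ) 1, ℝ) :=
  ⟨fun x => ((polyEnum k).map (algebraMap ℚ ℝ)).eval (x : ℝ),
   (((polyEnum k).map (algebraMap ℚ ℝ)).continuous).comp continuous_subtype_val⟩

noncomputable def deltaC (p : Baire) (f : C(Set.Icc (0:ℝ) 1, ℝ)) : Prop :=
  ∀ n, ‖f - polyFun (p n)‖ ≤ (2 : ℝ) ^ (-(n : ℤ))

def IsDerivOn (f g : C(Set.Icc (0:ℝ) 1, ℝ)) : Prop :=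
  ∀ x : Set.Icc (0:ℝ) 1,
    HasDerivWithinAt (Set.IccExtend (by norm_num : (0:ℝ) ≤ 1) f) (g x) (Set.Icc 0 1) (x : ℝ)

noncomputable def diffP : Problem where
  dom := {p | ∃ f g, deltaC p f ∧ IsDerivOn f g}
  sol := fun p => {q | ∃ f g, deltaC p f ∧ IsDerivOn f g ∧ deltaC q g}

-- ### auxiliary development

def decodeW : ℕ → List Bool
  | 0 => []
  | (n+1) => decide (n % 2 = 1) :: decodeW (n / 2)
decreasing_by exact Nat.lt_succ_of_le (Nat.div_le_self n 2)

lemma decodeW_zero : decodeW 0 = [] := by rw [decodeW]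

lemma decodeW_wordCode (w : List Bool) : decodeW (wordCode w) = w := by
  induction w with
  | nil => rw [show wordCode [] = 0 from rfl, decodeW]
  | cons b w ih =>
    rcases b with _ | _
    · have h1 : wordCode (false :: w) = (2 * wordCode w) + 1 := by simp [wordCode]
      rw [h1, decodeW]
      simp [Nat.mul_mod_right, show (2 * wordCode w)/2 = wordCode w by omega, ih]
    · have h1 : wordCode (true :: w) = (2 * wordCode w + 1) + 1 := by simp [wordCode]
      rw [h1, decodeW]
      simp [Nat.mul_add_mod, show (2 * wordCode w + 1)/2 = wordCode w by omega, ih]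

lemma wordCode_decodeW (n : ℕ) : wordCode (decodeW n) = n := by
  induction n using Nat.strong_induction_on with
  | _ n ih =>
    match n with
    | 0 => rw [decodeW]; rfl
    | (m+1) =>
      rw [decodeW, wordCode]
      have h2 : wordCode (decodeW (m/2)) = m/2 :=
        ih _ (Nat.lt_succ_of_le (Nat.div_le_self m 2))
      rw [h2]
      by_cases h : m % 2 = 1 <;> simp [h] <;> omega

lemma wordCode_inj {w v : List Bool} (h : wordCode w = wordCode v) : w = v := by
  have := congrArg decodeW h; rwa [decodeW_wordCode, decodeW_wordCode] at this

lemma length_prefixList (x : Baire) (k : ℕ) : (prefixList x k).length = k := by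
  simp [prefixList]

lemma prefixList_succ (x : Baire) (k : ℕ) :
    prefixList x (k+1) = prefixList x k ++ [decide (x k = 1)] := by
  simp [prefixList, List.range_succ]

lemma take_prefixList (x : Baire) (k m : ℕ) :
    (prefixList x m).take k = prefixList x (min k m) := by
  simp [prefixList, ← List.map_take, List.take_range]

lemma getD_prefixList (x : Baire) {i k : ℕ} (h : i < k) :
    (prefixList x k).getD i false = decide (x i = 1) := by
  rw [List.getD_eq_getElem _ _ (by simpa [length_prefixList] using h)]
  simp [prefixList]

open Classical in
lemma chi_apply (A : Set ℕ) (n : ℕ) : chi A n = if n ∈ A then 1 else 0 := by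
  simp [chi, Set.indicator_apply]

lemma chi_le_one (A : Set ℕ) (n : ℕ) : chi A n ≤ 1 := by
  classical
  rw [chi_apply]; split <;> simp

lemma chi_eq_one_iff {A : Set ℕ} {n : ℕ} : chi A n = 1 ↔ n ∈ A := by
  classical
  rw [chi_apply]; split <;> simp_all

lemma pfst_pairB (a b : Baire) : pfst (pairB a b) = a := by
  funext n
  simp [pfst, pairB, Nat.mul_mod_right, Nat.mul_div_cancel_left _ (by norm_num : (0:ℕ) < 2)]

lemma psnd_pairB (a b : Baire) : psnd (pairB a b) = b := by
  funext n
  have h1 : (2 * n + 1) % 2 = 1 := by omega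
  have h2 : (2 * n + 1) / 2 = n := by omega
  simp [psnd, pairB, h1, h2]

-- ### Direction A : SEP1 <= Cle2

open Classical in
noncomputable def KsepAux (c s : ℕ) (u : Fin (2*s+2) → ℕ) : ℕ :=
  if ∃ i < (decodeW c).length, ∃ t : Fin (s+1),
      (u ⟨2*t.val, by have := t.isLt; omega⟩ = i+1 ∧ (decodeW c).getD i false = false) ∨
      (u ⟨2*t.val+1, by have := t.isLt; omega⟩ = i+1 ∧ (decodeW c).getD i false = true)
  then c + 1 else 0

noncomputable def Ksep (r : Baire) : Baire :=
  fun m => KsepAux m.unpair.1 m.unpair.2 (fun j => r j)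

def badW (r : Baire) (w : List Bool) : Prop :=
  ∃ i < w.length, (i ∈ rangeM (pfst r) ∧ w.getD i false = false) ∨
    (i ∈ rangeM (psnd r) ∧ w.getD i false = true)

lemma mem_rangeM_Ksep (r : Baire) (n : ℕ) :
    n ∈ rangeM (Ksep r) ↔ badW r (decodeW n) := by
  constructor
  · rintro ⟨m, hm⟩
    unfold Ksep KsepAux at hm
    split at hm
    case isTrue h =>
      have hc : m.unpair.1 = n := by omega
      subst hc
      obtain ⟨i, hi, ⟨t, ht⟩⟩ := h
      refine ⟨i, hi, ?_⟩
      rcases ht with ⟨h1, h2⟩ | ⟨h1, h2⟩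
      · exact Or.inl ⟨⟨t.val, h1⟩, h2⟩
      · exact Or.inr ⟨⟨t.val, h1⟩, h2⟩
    case isFalse => exact absurd hm (by omega)
  · rintro ⟨i, hi, hcase⟩
    have key : ∀ t : ℕ, ((pfst r t = i+1 ∧ (decodeW n).getD i false = false) ∨
        (psnd r t = i+1 ∧ (decodeW n).getD i false = true)) → n ∈ rangeM (Ksep r) := by
      intro t ht
      refine ⟨Nat.pair n t, ?_⟩
      show KsepAux (Nat.pair n t).unpair.1 (Nat.pair n t).unpair.2 _ = n + 1
      rw [Nat.unpair_pair]
      unfold KsepAux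
      rw [if_pos ?_]
      refine ⟨i, hi, ⟨⟨t, Nat.lt_succ_self t⟩, ?_⟩⟩
      rcases ht with ⟨h1, h2⟩ | ⟨h1, h2⟩
      · exact Or.inl ⟨h1, h2⟩
      · exact Or.inr ⟨h1, h2⟩
    rcases hcase with ⟨⟨t, h1⟩, h2⟩ | ⟨⟨t, h1⟩, h2⟩
    · exact key t (Or.inl ⟨h1, h2⟩)
    · exact key t (Or.inr ⟨h1, h2⟩)

lemma continuous_Ksep : Continuous Ksep := by
  apply continuous_pi
  intro m
  have h1 : Continuous fun (u : Fin (2*m.unpair.2+2) → ℕ) =>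
      KsepAux m.unpair.1 m.unpair.2 u := continuous_of_discreteTopology
  exact h1.comp (continuous_pi fun j => continuous_apply (j : ℕ))

-- q in Ap (Ksep r) is a separator
lemma Ap_Ksep_forced {r : Baire} {q : Baire} (hq : q ∈ Ap (Ksep r)) :
    (∀ i ∈ rangeM (pfst r), q i = 1) ∧ (∀ i ∈ rangeM (psnd r), q i ≠ 1) := by
  obtain ⟨hle, hcode⟩ := hq
  constructor
  · intro i hi
    by_contra hne
    apply hcode (i+1)
    rw [mem_rangeM_Ksep, decodeW_wordCode]
    exact ⟨i, by rw [length_prefixList]; omega,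
      Or.inl ⟨hi, by rw [getD_prefixList _ (Nat.lt_succ_self i)]; simpa using hne⟩⟩
  · intro i hi he
    apply hcode (i+1)
    rw [mem_rangeM_Ksep, decodeW_wordCode]
    exact ⟨i, by rw [length_prefixList]; omega,
      Or.inr ⟨hi, by rw [getD_prefixList _ (Nat.lt_succ_self i)]; simpa using he⟩⟩

lemma Ap_Ksep_sol {r : Baire} (hdisj : rangeM (pfst r) ∩ rangeM (psnd r) = ∅)
    {q : Baire} (hq : q ∈ Ap (Ksep r)) :
    q = chi {n | q n = 1} ∧ rangeM (pfst r) ⊆ {n | q n = 1} ∧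
      {n | q n = 1} ⊆ (rangeM (psnd r))ᶜ := by
  obtain ⟨h1, h2⟩ := Ap_Ksep_forced hq
  refine ⟨?_, fun i hi => h1 i hi, fun i hi => fun hmem => h2 i hmem hi⟩
  funext n
  rw [chi_apply]
  split
  · assumption
  · have := hq.1 n
    simp only [Set.mem_setOf_eq] at *
    omega

lemma chi_mem_Ap_Ksep {r : Baire} (hdisj : rangeM (pfst r) ∩ rangeM (psnd r) = ∅)
    {A : Set ℕ} (hA1 : rangeM (pfst r) ⊆ A) (hA2 : A ⊆ (rangeM (psnd r))ᶜ) :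
    chi A ∈ Ap (Ksep r) := by
  refine ⟨chi_le_one A, ?_⟩
  intro k hk
  rw [mem_rangeM_Ksep, decodeW_wordCode] at hk
  obtain ⟨i, hi, hcase⟩ := hk
  rw [length_prefixList] at hi
  rcases hcase with ⟨hmem, hbit⟩ | ⟨hmem, hbit⟩
  · rw [getD_prefixList _ hi] at hbit
    have : chi A i = 1 := chi_eq_one_iff.mpr (hA1 hmem)
    simp [this] at hbit
  · rw [getD_prefixList _ hi] at hbit
    have : chi A i = 1 := by simpa using hbit
    exact hA2 (chi_eq_one_iff.mp this) hmem

lemma redA : SWRed SEP1 Cle2 := by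
  refine ⟨Set.univ, Set.univ, Ksep, id, continuous_Ksep.continuousOn,
    continuous_id.continuousOn, ?_⟩
  rintro r ⟨hdisj, henc⟩
  refine ⟨trivial, ⟨?_, ?_⟩, ?_⟩
  · -- nonempty
    exact ⟨chi (rangeM (pfst r)),
      chi_mem_Ap_Ksep hdisj (fun i hi => hi)
        (fun i hi hmem => Set.eq_empty_iff_forall_notMem.mp hdisj i ⟨hi, hmem⟩)⟩
  · -- encard ≤ 2
    set U := rangeM (pfst r) ∪ rangeM (psnd r) with hU
    have hsub : Ap (Ksep r) ⊆
        {chi (rangeM (pfst r)), chi (rangeM (pfst r) ∪ Uᶜ)} := by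
      intro q hq
      obtain ⟨hchi, hs1, hs2⟩ := Ap_Ksep_sol hdisj hq
      set A := {n | q n = 1} with hA
      by_cases hex : ∃ m, m ∈ A \ rangeM (pfst r)
      · obtain ⟨m, hmA, hmnp⟩ := hex
        have hmU : m ∈ Uᶜ := by
          intro hmem
          rcases hmem with h | h
          · exact hmnp h
          · exact hs2 hmA h
        have hAeq : A = rangeM (pfst r) ∪ Uᶜ := by
          apply Set.Subset.antisymm
          · intro a ha
            by_cases haU : a ∈ U
            · rcases haU with h | h
              · exact Or.inl h
              · exact absurd h (hs2 ha)
            · exact Or.inr haU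
          · intro a ha
            rcases ha with h | h
            · exact hs1 h
            · have : a = m := Set.encard_le_one_iff.mp henc a m h hmU
              rw [this]; exact hmA
        right
        rw [hchi, hAeq]
        exact rfl
      · left
        have hAeq : A = rangeM (pfst r) := by
          apply Set.Subset.antisymm
          · intro a ha
            by_contra hna
            exact hex ⟨a, ha, hna⟩
          · exact hs1
        rw [hchi, hAeq]
    calc (Ap (Ksep r)).encard ≤ _ := Set.encard_mono hsub
      _ ≤ 2 := by
          apply le_trans (Set.encard_insert_le _ _)
          rw [Set.encard_singleton]
          norm_num
  · intro q hq
    obtain ⟨hchi, hs1, hs2⟩ := Ap_Ksep_sol hdisj hq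
    exact ⟨trivial, ⟨{n | q n = 1}, hchi, hs1, hs2⟩⟩

-- ### Direction B machinery: trees, aliveness
def trueAliveW (p : Baire) (v : List Bool) : Prop :=
  ∀ w, w <+: v → wordCode w ∉ rangeM p

def goodW (p : Baire) (v : List Bool) : Prop :=
  ∀ s, ∃ u, v <+: u ∧ s ≤ u.length ∧ trueAliveW p u

def killedBy (p : Baire) (s n : ℕ) : Prop := ∃ t ≤ s, p t = n + 1

def deadCore (k : ℕ → Prop) (s : ℕ) (v : List Bool) : Prop :=
  v.length ≤ s ∧ ∀ u : List Bool, u.length = s → v <+: u → ∃ w, w <+: u ∧ k (wordCode w)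

def deadAt (p : Baire) (s : ℕ) (v : List Bool) : Prop := deadCore (killedBy p s) s v

lemma trueAliveW_of_prefix {p : Baire} {w v : List Bool} (h : w <+: v)
    (hv : trueAliveW p v) : trueAliveW p w :=
  fun w' hw' => hv w' (hw'.trans h)

lemma goodW_trueAliveW {p : Baire} {v : List Bool} (h : goodW p v) : trueAliveW p v := by
  obtain ⟨u, hpre, _, hu⟩ := h 0
  exact trueAliveW_of_prefix hpre hu

lemma prefix_take_of_prefix {v u : List Bool} (h : v <+: u) {s : ℕ} (hs : v.length ≤ s) :
    v <+: u.take s := by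
  rw [List.prefix_iff_eq_take] at h ⊢
  rw [List.take_take, min_eq_left hs] at *
  exact h

lemma deadAt_mono {p : Baire} {s s' : ℕ} (hss : s ≤ s') {v : List Bool}
    (h : deadAt p s v) : deadAt p s' v := by
  obtain ⟨hlen, hall⟩ := h
  refine ⟨hlen.trans hss, ?_⟩
  intro u hu hvu
  have h1 : (u.take s).length = s := by rw [List.length_take]; omega
  have h2 : v <+: u.take s := prefix_take_of_prefix hvu hlen
  obtain ⟨w, hw, t, ht, hpt⟩ := hall (u.take s) h1 h2
  exact ⟨w, hw.trans (List.take_prefix s u), t, ht.trans hss, hpt⟩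

lemma not_deadAt_of_goodW {p : Baire} {v : List Bool} (h : goodW p v) (s : ℕ) :
    ¬ deadAt p s v := by
  rintro ⟨hlen, hall⟩
  obtain ⟨u, hpre, hslen, hu⟩ := h s
  have h1 : (u.take s).length = s := by rw [List.length_take]; omega
  have h2 : v <+: u.take s := prefix_take_of_prefix hpre hlen
  obtain ⟨w, hw, t, _, hpt⟩ := hall (u.take s) h1 h2
  exact hu w (hw.trans (List.take_prefix s u)) ⟨t, hpt⟩

-- compactness: never dead implies good
lemma goodW_of_not_dead {p : Baire} {v : List Bool} (h : ∀ s, ¬ deadAt p s v) :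
    goodW p v := by
  intro s
  by_contra hcon
  push_neg at hcon
  -- no trueAlive extension of length ≥ s
  set S := max s v.length with hS
  -- every extension of length S has a killed prefix
  have hkill : ∀ u : List Bool, u.length = S → v <+: u →
      ∃ w t, w <+: u ∧ p t = wordCode w + 1 := by
    intro u hu hvu
    have : ¬ trueAliveW p u := by
      intro hta
      exact hcon u hvu (by omega) hta
    unfold trueAliveW at this
    push_neg at this
    obtain ⟨w, hw, hmem⟩ := this
    obtain ⟨t, ht⟩ := hmem
    exact ⟨w, t, hw, ht⟩
  -- choice of kill stages
  have hch : ∀ u : List Bool, ∃ t : ℕ, (u.length = S ∧ v <+: u) →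
      ∃ w, w <+: u ∧ p t = wordCode w + 1 := by
    intro u
    by_cases hc : u.length = S ∧ v <+: u
    · obtain ⟨w, t, hw, ht⟩ := hkill u hc.1 hc.2
      exact ⟨t, fun _ => ⟨w, hw, ht⟩⟩
    · exact ⟨0, fun hh => absurd hh hc⟩
  choose tf htf using hch
  -- the set of length-S extensions is finite
  have hfin : {u : List Bool | u.length = S}.Finite := by
    apply Set.Finite.subset (Set.finite_range (fun f : Fin S → Bool => List.ofFn f))
    intro u hu
    refine ⟨fun i => u.getD i false, ?_⟩
    apply List.ext_getElem
    · simp only [Set.mem_setOf_eq] at hu; simp [hu]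
    · intro i h1 h2
      simp only [List.getElem_ofFn]
      rw [List.getD_eq_getElem u false h2]
  obtain ⟨s1, hs1⟩ := (hfin.image tf).bddAbove
  set sS := max s1 S with hsS
  apply h sS
  refine ⟨by omega, ?_⟩
  intro u hu hvu
  have hlen : v.length ≤ S := le_max_right _ _
  have h1 : (u.take S).length = S := by rw [List.length_take]; omega
  have h2 : v <+: u.take S := prefix_take_of_prefix hvu hlen
  obtain ⟨w, hw, ht⟩ := htf (u.take S) ⟨h1, h2⟩
  refine ⟨w, hw.trans (List.take_prefix S u), tf (u.take S), ?_, ht⟩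
  have : tf (u.take S) ∈ tf '' {u : List Bool | u.length = S} := ⟨u.take S, h1, rfl⟩
  have := hs1 this
  omega

lemma dead_of_not_good {p : Baire} {v : List Bool} (h : ¬ goodW p v) :
    ∃ s, deadAt p s v := by
  by_contra hcon
  push_neg at hcon
  exact h (goodW_of_not_dead hcon)

lemma good_dichotomy {p : Baire} {v : List Bool} (h : goodW p v) :
    goodW p (v ++ [false]) ∨ goodW p (v ++ [true]) := by
  by_contra hcon
  push_neg at hcon
  obtain ⟨h0, h1⟩ := hcon
  unfold goodW at h0 h1
  push_neg at h0 h1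
  obtain ⟨s0, hs0⟩ := h0
  obtain ⟨s1, hs1⟩ := h1
  obtain ⟨u, hpre, hlen, hta⟩ := h (max s0 s1 + v.length + 1)
  obtain ⟨rest, hrest⟩ := hpre
  have hrlen : rest ≠ [] := by
    intro he
    rw [he, List.append_nil] at hrest
    subst hrest
    omega
  obtain ⟨b, rest', hbr⟩ := List.exists_cons_of_ne_nil hrlen
  have hb : v ++ [b] <+: u := by
    rw [← hrest, hbr]
    exact ⟨rest', by simp⟩
  rcases b with _ | _
  · exact hs0 u hb (by omega) hta
  · exact hs1 u hb (by omega) hta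
-- ### path construction
open Classical in
noncomputable def stepW (p : Baire) (w : List Bool) : List Bool :=
  if goodW p (w ++ [false]) then w ++ [false] else w ++ [true]

noncomputable def wseqFrom (p : Baire) (v : List Bool) : ℕ → List Bool
  | 0 => v
  | n+1 => stepW p (wseqFrom p v n)

lemma goodW_stepW {p : Baire} {w : List Bool} (h : goodW p w) : goodW p (stepW p w) := by
  unfold stepW
  split
  · assumption
  · rcases good_dichotomy h with h' | h'
    · contradiction
    · exact h'

lemma goodW_wseqFrom {p : Baire} {v : List Bool} (h : goodW p v) (n : ℕ) :
    goodW p (wseqFrom p v n) := by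
  induction n with
  | zero => exact h
  | succ n ih => exact goodW_stepW ih

lemma length_wseqFrom (p : Baire) (v : List Bool) (n : ℕ) :
    (wseqFrom p v n).length = v.length + n := by
  induction n with
  | zero => rfl
  | succ n ih =>
    show (stepW p (wseqFrom p v n)).length = v.length + (n+1)
    unfold stepW
    split <;> simp [ih] <;> omega

lemma wseqFrom_prefix_succ (p : Baire) (v : List Bool) (n : ℕ) :
    wseqFrom p v n <+: wseqFrom p v (n+1) := by
  show wseqFrom p v n <+: stepW p (wseqFrom p v n)
  unfold stepW
  split <;> exact List.prefix_append _ _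

lemma wseqFrom_prefix_le (p : Baire) (v : List Bool) {n m : ℕ} (h : n ≤ m) :
    wseqFrom p v n <+: wseqFrom p v m := by
  induction m with
  | zero => rw [Nat.le_zero.mp h]
  | succ m ih =>
    rcases Nat.lt_or_ge n (m+1) with h' | h'
    · exact (ih (by omega)).trans (wseqFrom_prefix_succ p v m)
    · have : n = m + 1 := by omega
      rw [this]

noncomputable def limW (p : Baire) (v : List Bool) : Baire :=
  fun n => cond ((wseqFrom p v (n+1)).getD n false) 1 0

lemma limW_le_one (p : Baire) (v : List Bool) (n : ℕ) : limW p v n ≤ 1 := by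
  unfold limW
  cases (wseqFrom p v (n+1)).getD n false <;> simp

lemma prefixList_limW (p : Baire) (v : List Bool) (k : ℕ) :
    prefixList (limW p v) k = (wseqFrom p v k).take k := by
  induction k with
  | zero => simp [prefixList]
  | succ k ih =>
    rw [prefixList_succ, ih]
    have hlen : k < (wseqFrom p v (k+1)).length := by rw [length_wseqFrom]; omega
    have hlk : k ≤ (wseqFrom p v k).length := by rw [length_wseqFrom]; omega
    -- take k of step = take k of previous
    obtain ⟨rest, hrest⟩ := wseqFrom_prefix_succ p v k
    have h1 : (wseqFrom p v (k+1)).take k = (wseqFrom p v k).take k := by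
      rw [← hrest, List.take_append_of_le_length hlk]
    have h2 : (wseqFrom p v (k+1)).take (k+1) =
        (wseqFrom p v (k+1)).take k ++ [(wseqFrom p v (k+1)).getD k false] := by
      rw [List.take_succ, List.getD_eq_getElem _ _ hlen]
      simp [List.getElem?_eq_getElem hlen]
    rw [h2, h1]
    congr 1
    unfold limW
    cases hb : (wseqFrom p v (k+1)).getD k false <;> simp [hb]

lemma limW_mem_Ap {p : Baire} {v : List Bool} (h : goodW p v) : limW p v ∈ Ap p := by
  refine ⟨limW_le_one p v, ?_⟩
  intro k
  rw [prefixList_limW]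
  have hg := goodW_wseqFrom h k
  have hta := goodW_trueAliveW hg
  exact hta _ (List.take_prefix k _)

lemma prefixList_limW_base {p : Baire} (v : List Bool) :
    prefixList (limW p v) v.length = v := by
  rw [prefixList_limW]
  have h0 : wseqFrom p v 0 <+: wseqFrom p v v.length := wseqFrom_prefix_le p v (by omega)
  have := List.prefix_iff_eq_take.mp h0
  exact this.symm

lemma exists_path_through {p : Baire} {v : List Bool} (h : goodW p v) :
    ∃ x ∈ Ap p, prefixList x v.length = v :=
  ⟨limW p v, limW_mem_Ap h, prefixList_limW_base v⟩
-- ### Direction B: the K map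
def eitherDeadK (k : ℕ → Prop) (s : ℕ) (w : List Bool) : Prop :=
  deadCore k s (w ++ [false]) ∨ deadCore k s (w ++ [true])

def condACore (kk : ℕ → ℕ → Prop) (c s : ℕ) : Prop :=
  eitherDeadK (kk s) s (decodeW c) ∧ (∀ s' < s, ¬ eitherDeadK (kk s') s' (decodeW c)) ∧
    deadCore (kk s) s (decodeW c ++ [false])

def condBCore (kk : ℕ → ℕ → Prop) (c s : ℕ) : Prop :=
  eitherDeadK (kk s) s (decodeW c) ∧ (∀ s' < s, ¬ eitherDeadK (kk s') s' (decodeW c)) ∧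
    ¬ deadCore (kk s) s (decodeW c ++ [false])

lemma deadCore_congr {k k' : ℕ → Prop} (h : ∀ n, k n ↔ k' n) (s : ℕ) (v : List Bool) :
    deadCore k s v ↔ deadCore k' s v := by
  unfold deadCore
  constructor
  · rintro ⟨h1, h2⟩
    refine ⟨h1, fun u hu hvu => ?_⟩
    obtain ⟨w, hw, hk⟩ := h2 u hu hvu
    exact ⟨w, hw, (h (wordCode w)).mp hk⟩
  · rintro ⟨h1, h2⟩
    refine ⟨h1, fun u hu hvu => ?_⟩
    obtain ⟨w, hw, hk⟩ := h2 u hu hvu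
    exact ⟨w, hw, (h (wordCode w)).mpr hk⟩

lemma eitherDeadK_congr {k k' : ℕ → Prop} (h : ∀ n, k n ↔ k' n) (s : ℕ) (w : List Bool) :
    eitherDeadK k s w ↔ eitherDeadK k' s w := by
  unfold eitherDeadK
  rw [deadCore_congr h, deadCore_congr h]

lemma condACore_congr {kk kk' : ℕ → ℕ → Prop} {s : ℕ}
    (h : ∀ s' ≤ s, ∀ n, kk s' n ↔ kk' s' n) (c : ℕ) :
    condACore kk c s ↔ condACore kk' c s := by
  unfold condACore
  rw [eitherDeadK_congr (h s le_rfl), deadCore_congr (h s le_rfl)]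
  constructor <;> (rintro ⟨h1, h2, h3⟩; refine ⟨h1, fun s' hs' => ?_, h3⟩)
  · rw [← eitherDeadK_congr (h s' hs'.le)]; exact h2 s' hs'
  · rw [eitherDeadK_congr (h s' hs'.le)]; exact h2 s' hs'

lemma condBCore_congr {kk kk' : ℕ → ℕ → Prop} {s : ℕ}
    (h : ∀ s' ≤ s, ∀ n, kk s' n ↔ kk' s' n) (c : ℕ) :
    condBCore kk c s ↔ condBCore kk' c s := by
  unfold condBCore
  rw [eitherDeadK_congr (h s le_rfl), deadCore_congr (h s le_rfl)]
  constructor <;> (rintro ⟨h1, h2, h3⟩; refine ⟨h1, fun s' hs' => ?_, h3⟩)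
  · rw [← eitherDeadK_congr (h s' hs'.le)]; exact h2 s' hs'
  · rw [eitherDeadK_congr (h s' hs'.le)]; exact h2 s' hs'

def finKill (s : ℕ) (u : Fin (s+1) → ℕ) : ℕ → ℕ → Prop :=
  fun s' n => ∃ t : Fin (s+1), t.val ≤ s' ∧ u t = n + 1

open Classical in
noncomputable def KAaux (c s : ℕ) (u : Fin (s+1) → ℕ) : ℕ :=
  if condACore (finKill s u) c s then c + 1 else 0

open Classical in
noncomputable def KBaux (c s : ℕ) (u : Fin (s+1) → ℕ) : ℕ :=
  if condBCore (finKill s u) c s then c + 1 else 0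

noncomputable def KA (p : Baire) : Baire :=
  fun m => KAaux m.unpair.1 m.unpair.2 (fun t => p t)

noncomputable def KB (p : Baire) : Baire :=
  fun m => KBaux m.unpair.1 m.unpair.2 (fun t => p t)

noncomputable def Ktree (p : Baire) : Baire := pairB (KA p) (KB p)

lemma finKill_iff (p : Baire) (s : ℕ) {s' : ℕ} (hs' : s' ≤ s) (n : ℕ) :
    finKill s (fun t => p t) s' n ↔ killedBy p s' n := by
  constructor
  · rintro ⟨t, ht, hpt⟩
    exact ⟨t.val, ht, hpt⟩
  · rintro ⟨t, ht, hpt⟩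
    exact ⟨⟨t, by omega⟩, ht, hpt⟩

open Classical in
lemma KA_spec (p : Baire) (m : ℕ) :
    KA p m = if condACore (killedBy p) m.unpair.1 m.unpair.2 then m.unpair.1 + 1 else 0 := by
  unfold KA KAaux
  congr 1
  · exact propext (condACore_congr (fun s' hs' n => finKill_iff p _ hs' n) _)

open Classical in
lemma KB_spec (p : Baire) (m : ℕ) :
    KB p m = if condBCore (killedBy p) m.unpair.1 m.unpair.2 then m.unpair.1 + 1 else 0 := by
  unfold KB KBaux
  congr 1
  · exact propext (condBCore_congr (fun s' hs' n => finKill_iff p _ hs' n) _)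

open Classical in
lemma mem_rangeM_KA (p : Baire) (n : ℕ) :
    n ∈ rangeM (KA p) ↔ ∃ s, condACore (killedBy p) n s := by
  constructor
  · rintro ⟨m, hm⟩
    rw [KA_spec] at hm
    split at hm
    · have : m.unpair.1 = n := by omega
      subst this
      exact ⟨m.unpair.2, by assumption⟩
    · exact absurd hm (by omega)
  · rintro ⟨s, hs⟩
    refine ⟨Nat.pair n s, ?_⟩
    rw [KA_spec, Nat.unpair_pair]
    simp only [hs, if_true]

open Classical in
lemma mem_rangeM_KB (p : Baire) (n : ℕ) :
    n ∈ rangeM (KB p) ↔ ∃ s, condBCore (killedBy p) n s := by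
  constructor
  · rintro ⟨m, hm⟩
    rw [KB_spec] at hm
    split at hm
    · have : m.unpair.1 = n := by omega
      subst this
      exact ⟨m.unpair.2, by assumption⟩
    · exact absurd hm (by omega)
  · rintro ⟨s, hs⟩
    refine ⟨Nat.pair n s, ?_⟩
    rw [KB_spec, Nat.unpair_pair]
    simp only [hs, if_true]

lemma continuous_Ktree : Continuous Ktree := by
  apply continuous_pi
  intro m
  have hKA : ∀ m', Continuous fun p => KA p m' := by
    intro m'
    have h1 : Continuous fun (u : Fin (m'.unpair.2+1) → ℕ) =>
        KAaux m'.unpair.1 m'.unpair.2 u := continuous_of_discreteTopology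
    exact h1.comp (continuous_pi fun t => continuous_apply (t : ℕ))
  have hKB : ∀ m', Continuous fun p => KB p m' := by
    intro m'
    have h1 : Continuous fun (u : Fin (m'.unpair.2+1) → ℕ) =>
        KBaux m'.unpair.1 m'.unpair.2 u := continuous_of_discreteTopology
    exact h1.comp (continuous_pi fun t => continuous_apply (t : ℕ))
  show Continuous fun p => pairB (KA p) (KB p) m
  unfold pairB
  split
  · exact hKA _
  · exact hKB _
-- ### Direction B: the H map
def follow (q : Baire) : ℕ → List Bool
  | 0 => []
  | n+1 => follow q n ++ [decide (q (wordCode (follow q n)) = 1)]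

def Hfol (q : Baire) : Baire := fun n => if q (wordCode (follow q n)) = 1 then 1 else 0

lemma Hfol_le_one (q : Baire) (n : ℕ) : Hfol q n ≤ 1 := by
  unfold Hfol; split <;> simp

lemma prefixList_Hfol (q : Baire) (n : ℕ) : prefixList (Hfol q) n = follow q n := by
  induction n with
  | zero => simp [prefixList, follow]
  | succ n ih =>
    rw [prefixList_succ, ih]
    show _ = follow q n ++ [decide (q (wordCode (follow q n)) = 1)]
    congr 1
    unfold Hfol
    by_cases h : q (wordCode (follow q n)) = 1 <;> simp [h]

lemma follow_congr {q q' : Baire} (n : ℕ)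
    (h : ∀ i < n, q' (wordCode (follow q i)) = q (wordCode (follow q i))) :
    follow q' n = follow q n := by
  induction n with
  | zero => rfl
  | succ n ih =>
    have h1 : follow q' n = follow q n := ih (fun i hi => h i (by omega))
    show follow q' n ++ _ = follow q n ++ _
    rw [h1, h n (by omega)]

lemma continuous_Hfol : Continuous Hfol := by
  apply continuous_pi
  intro n
  rw [continuous_iff_continuousAt]
  intro q
  apply Filter.EventuallyEq.continuousAt (y := Hfol q n)
  have hopen : IsOpen (⋂ i ∈ Finset.range (n+1),
      {q' : Baire | q' (wordCode (follow q i)) = q (wordCode (follow q i))}) := by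
    apply isOpen_biInter_finset
    intro i _
    have : {q' : Baire | q' (wordCode (follow q i)) = q (wordCode (follow q i))} =
        (fun q' : Baire => q' (wordCode (follow q i))) ⁻¹'
          {q (wordCode (follow q i))} := by
      ext q'; simp
    rw [this]
    exact (continuous_apply (wordCode (follow q i))).isOpen_preimage _
      (isOpen_discrete _)
  apply Filter.eventually_of_mem (hopen.mem_nhds ?_)
  · intro q' hq'
    simp only [Set.mem_iInter, Set.mem_setOf_eq, Finset.mem_range] at hq'
    have h1 : follow q' n = follow q n := follow_congr n (fun i hi => hq' i (by omega))
    show Hfol q' n = Hfol q n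
    unfold Hfol
    rw [h1, hq' n (by omega)]
  · simp only [Set.mem_iInter, Set.mem_setOf_eq]
    intro i _
    trivial
-- ### Direction B: main proofs
lemma prefix_bit {x : Baire} {L : ℕ} {w : List Bool} {b : Bool}
    (h : prefixList x (L+1) = w ++ [b]) (hlen : w.length = L) :
    prefixList x L = w ∧ decide (x L = 1) = b := by
  rw [prefixList_succ] at h
  have := List.append_inj h (by rw [length_prefixList, hlen])
  refine ⟨this.1, ?_⟩
  have h2 := this.2
  simpa using h2

lemma goodW_nil {p : Baire} (hne : (Ap p).Nonempty) : goodW p [] := by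
  obtain ⟨x, hx⟩ := hne
  intro s
  refine ⟨prefixList x s, List.nil_prefix, by rw [length_prefixList], ?_⟩
  intro w hw
  have h1 : w = prefixList x (min w.length s) := by
    rw [← take_prefixList]
    exact List.prefix_iff_eq_take.mp hw
  rw [h1]
  exact hx.2 _

lemma not_mem_ranges_good {p : Baire} {n : ℕ}
    (hA : n ∉ rangeM (KA p)) (hB : n ∉ rangeM (KB p)) :
    goodW p (decodeW n ++ [false]) ∧ goodW p (decodeW n ++ [true]) := by
  classical
  have hnever : ∀ s, ¬ eitherDeadK (killedBy p s) s (decodeW n) := by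
    by_contra hc
    push_neg at hc
    obtain ⟨s, hs⟩ := hc
    have hex : ∃ s, eitherDeadK (killedBy p s) s (decodeW n) := ⟨s, hs⟩
    by_cases hleft : deadCore (killedBy p (Nat.find hex)) (Nat.find hex) (decodeW n ++ [false])
    · exact hA ((mem_rangeM_KA p n).mpr
        ⟨Nat.find hex, Nat.find_spec hex, fun s' hs' => Nat.find_min hex hs', hleft⟩)
    · exact hB ((mem_rangeM_KB p n).mpr
        ⟨Nat.find hex, Nat.find_spec hex, fun s' hs' => Nat.find_min hex hs', hleft⟩)
  constructor
  · exact goodW_of_not_dead (fun s hd => hnever s (Or.inl hd))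
  · exact goodW_of_not_dead (fun s hd => hnever s (Or.inr hd))

lemma crux_le {p : Baire} (henc : (Ap p).encard ≤ 2) {n n' : ℕ}
    (hn : goodW p (decodeW n ++ [false]) ∧ goodW p (decodeW n ++ [true]))
    (hn' : goodW p (decodeW n' ++ [false]) ∧ goodW p (decodeW n' ++ [true]))
    (hLL : (decodeW n).length ≤ (decodeW n').length) :
    decodeW n = decodeW n' := by
  set w := decodeW n with hw
  set w' := decodeW n' with hw'
  obtain ⟨x0, hx0, hp0⟩ := exists_path_through hn.1
  obtain ⟨x1, hx1, hp1⟩ := exists_path_through hn.2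
  obtain ⟨y0, hy0, hq0⟩ := exists_path_through hn'.1
  obtain ⟨y1, hy1, hq1⟩ := exists_path_through hn'.2
  rw [show (w ++ [false]).length = w.length + 1 by simp] at hp0
  rw [show (w ++ [true]).length = w.length + 1 by simp] at hp1
  rw [show (w' ++ [false]).length = w'.length + 1 by simp] at hq0
  rw [show (w' ++ [true]).length = w'.length + 1 by simp] at hq1
  obtain ⟨hpx0, hb0⟩ := prefix_bit hp0 rfl
  obtain ⟨hpx1, hb1⟩ := prefix_bit hp1 rfl
  obtain ⟨hqy0, hc0⟩ := prefix_bit hq0 rfl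
  obtain ⟨hqy1, hc1⟩ := prefix_bit hq1 rfl
  have hxne : x0 ≠ x1 := by
    intro he
    rw [he] at hb0
    rw [hb0] at hb1
    exact absurd hb1 (by simp)
  have hyne : y0 ≠ y1 := by
    intro he
    rw [he] at hc0
    rw [hc0] at hc1
    exact absurd hc1 (by simp)
  have hfin : (Ap p).Finite := Set.finite_of_encard_le_coe (by exact_mod_cast henc)
  have hpairx : ({x0, x1} : Set Baire) = Ap p := by
    apply hfin.eq_of_subset_of_encard_le'
    · rintro z (rfl | rfl)
      · exact hx0
      · exact hx1
    · rw [Set.encard_pair hxne]; exact henc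
  have hpairy : ({y0, y1} : Set Baire) = Ap p := by
    apply hfin.eq_of_subset_of_encard_le'
    · rintro z (rfl | rfl)
      · exact hy0
      · exact hy1
    · rw [Set.encard_pair hyne]; exact henc
  have hmemy : ∀ z : Baire, z ∈ ({y0, y1} : Set Baire) → prefixList z w'.length = w' := by
    rintro z (rfl | rfl)
    · exact hqy0
    · exact hqy1
  have hx0y : x0 ∈ ({y0, y1} : Set Baire) := by rw [hpairy]; exact hx0
  have hx1y : x1 ∈ ({y0, y1} : Set Baire) := by rw [hpairy]; exact hx1
  rcases Nat.lt_or_ge w.length w'.length with hlt | hge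
  · exfalso
    have e0 : w'.getD w.length false = decide (x0 w.length = 1) := by
      rw [← hmemy x0 hx0y, getD_prefixList _ hlt]
    have e1 : w'.getD w.length false = decide (x1 w.length = 1) := by
      rw [← hmemy x1 hx1y, getD_prefixList _ hlt]
    rw [hb0] at e0
    rw [hb1] at e1
    rw [e0] at e1
    exact absurd e1 (by simp)
  · have heq : w.length = w'.length := le_antisymm hLL hge
    rw [← hpx0, heq]
    exact hmemy x0 hx0y

lemma crux {p : Baire} (henc : (Ap p).encard ≤ 2) {n n' : ℕ}
    (hn : goodW p (decodeW n ++ [false]) ∧ goodW p (decodeW n ++ [true]))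
    (hn' : goodW p (decodeW n' ++ [false]) ∧ goodW p (decodeW n' ++ [true])) :
    n = n' := by
  have : decodeW n = decodeW n' := by
    rcases le_total (decodeW n).length (decodeW n').length with h | h
    · exact crux_le henc hn hn' h
    · exact (crux_le henc hn' hn h).symm
  calc n = wordCode (decodeW n) := (wordCode_decodeW n).symm
    _ = wordCode (decodeW n') := by rw [this]
    _ = n' := wordCode_decodeW n'

lemma redB : SWRed Cle2 SEP1 := by
  classical
  refine ⟨Set.univ, Set.univ, Ktree, Hfol, continuous_Ktree.continuousOn,
    continuous_Hfol.continuousOn, ?_⟩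
  rintro p ⟨hne, henc⟩
  have hfst : pfst (Ktree p) = KA p := pfst_pairB _ _
  have hsnd : psnd (Ktree p) = KB p := psnd_pairB _ _
  refine ⟨trivial, ⟨?_, ?_⟩, ?_⟩
  · -- disjointness
    rw [hfst, hsnd]
    rw [Set.eq_empty_iff_forall_notMem]
    rintro n ⟨h1, h2⟩
    rw [mem_rangeM_KA] at h1
    rw [mem_rangeM_KB] at h2
    obtain ⟨s, e1, m1, d1⟩ := h1
    obtain ⟨s', e2, m2, d2⟩ := h2
    rcases lt_trichotomy s s' with h | h | h
    · exact m2 s h e1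
    · subst h; exact d2 d1
    · exact m1 s' h e2
  · -- encard of complement ≤ 1
    rw [hfst, hsnd]
    rw [Set.encard_le_one_iff]
    intro a b ha hb
    rw [Set.mem_compl_iff, Set.mem_union] at ha hb
    push_neg at ha hb
    exact crux henc (not_mem_ranges_good ha.1 ha.2) (not_mem_ranges_good hb.1 hb.2)
  · -- solution mapping
    rintro q ⟨A, hchi, hs1, hs2⟩
    rw [hfst] at hs1
    rw [hsnd] at hs2
    refine ⟨trivial, ?_⟩
    have hq1 : ∀ c : ℕ, (q c = 1 ↔ c ∈ A) := by
      intro c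
      rw [hchi]
      exact chi_eq_one_iff
    have key : ∀ n, goodW p (follow q n) := by
      intro n
      induction n with
      | zero => exact goodW_nil hne
      | succ n ih =>
        set w := follow q n with hwdef
        show goodW p (w ++ [decide (q (wordCode w) = 1)])
        by_cases hgF : goodW p (w ++ [false])
        · by_cases hgT : goodW p (w ++ [true])
          · by_cases hb : q (wordCode w) = 1 <;> simp [hb] <;> assumption
          · -- true child dies: bit must be false
            obtain ⟨s, hs⟩ := dead_of_not_good hgT
            have hex : ∃ s, eitherDeadK (killedBy p s) s w := ⟨s, Or.inr hs⟩
            have hleft : ¬ deadCore (killedBy p (Nat.find hex)) (Nat.find hex)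
                (w ++ [false]) := not_deadAt_of_goodW hgF _
            have hmem : wordCode w ∈ rangeM (KB p) := by
              rw [mem_rangeM_KB]
              refine ⟨Nat.find hex, ?_, ?_, ?_⟩
              · rw [decodeW_wordCode]; exact Nat.find_spec hex
              · intro s' hs'; rw [decodeW_wordCode]; exact Nat.find_min hex hs'
              · rw [decodeW_wordCode]; exact hleft
            have : wordCode w ∉ A := fun hmemA => hs2 hmemA hmem
            have hb : ¬ q (wordCode w) = 1 := fun he => this ((hq1 _).mp he)
            simp [hb]
            exact hgF
        · have hgT : goodW p (w ++ [true]) := by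
            rcases good_dichotomy ih with h | h
            · contradiction
            · exact h
          obtain ⟨s, hs⟩ := dead_of_not_good hgF
          have hex : ∃ s, eitherDeadK (killedBy p s) s w := ⟨s, Or.inl hs⟩
          have hleft : deadCore (killedBy p (Nat.find hex)) (Nat.find hex)
              (w ++ [false]) := by
            rcases Nat.find_spec hex with h | h
            · exact h
            · exact absurd h (not_deadAt_of_goodW hgT _)
          have hmem : wordCode w ∈ rangeM (KA p) := by
            rw [mem_rangeM_KA]
            refine ⟨Nat.find hex, ?_, ?_, ?_⟩
            · rw [decodeW_wordCode]; exact Nat.find_spec hex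
            · intro s' hs'; rw [decodeW_wordCode]; exact Nat.find_min hex hs'
            · rw [decodeW_wordCode]; exact hleft
          have hb : q (wordCode w) = 1 := (hq1 _).mpr (hs1 hmem)
          simp [hb]
          exact hgT
    refine ⟨Hfol_le_one q, ?_⟩
    intro k
    rw [prefixList_Hfol]
    exact goodW_trueAliveW (key k) _ (List.prefix_refl _)


/-- `C_{#≤2} ≡_sW SEP₁` (strong continuous Weihrauch equivalence). -/
theorem Cle2_sequiv_SEP1 : SWEquiv Cle2 SEP1 := ⟨redB, redA⟩
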